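/- The polynomials Φ_n satisfy the flatness recursion and boundary conditions: Φ_0''''(x) = 0 for all x, Φ_0(0) = Φ_0''(0) = Φ_0'(1) = 0 and Φ_0'''(1) = −1; and for every integer n ≥ 1, the fourth derivative satisfies Φ_n''''(x) = −Φ_{n−1}(x) for all x ∈ ℝ, with boundary values Φ_n(0) = 0, Φ_n''(0) = 0, Φ_n'(1) = 0 and Φ_n'''(1) = Ψ_n. -/

import Mathlib

open Finset
open Polynomial

/-- `Φ_0(x) = x/2 − x³/6`; for `n ≥ 1`,
`Φ_n(x) = (−1)^n [ Σ_{k=0}^n x^{4k+1}/((4k+1)!(4(n−k)+2)!)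
− Σ_{k=0}^n x^{4k+3}/((4k+3)!(4(n−k))!) ]`. -/
noncomputable def PhiF (n : ℕ) (x : ℝ) : ℝ :=
  if n = 0 then x / 2 - x ^ 3 / 6
  else
    (-1 : ℝ) ^ n *
      ((∑ k ∈ Finset.range (n + 1),
          x ^ (4 * k + 1) / (((4 * k + 1).factorial : ℝ) * ((4 * (n - k) + 2).factorial : ℝ))) -
       (∑ k ∈ Finset.range (n + 1),
          x ^ (4 * k + 3) / (((4 * k + 3).factorial : ℝ) * ((4 * (n - k)).factorial : ℝ))))

/-- `Ψ_n = (−1)^n [ Σ_{k=1}^n 1/((4k−2)!(4(n−k)+2)!) − Σ_{k=0}^n 1/((4k)!(4(n−k))!) ]`. -/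
noncomputable def PsiN (n : ℕ) : ℝ :=
  (-1 : ℝ) ^ n *
    ((∑ k ∈ Finset.Icc 1 n,
        (1 : ℝ) / (((4 * k - 2).factorial : ℝ) * ((4 * (n - k) + 2).factorial : ℝ))) -
     (∑ k ∈ Finset.range (n + 1),
        (1 : ℝ) / (((4 * k).factorial : ℝ) * ((4 * (n - k)).factorial : ℝ))))


noncomputable def Pp (n : ℕ) : Polynomial ℝ :=
  Polynomial.C ((-1:ℝ)^n) *
    ((∑ k ∈ Finset.range (n+1),
        Polynomial.C (1/(((4*k+1).factorial : ℝ) * ((4*(n-k)+2).factorial : ℝ))) * Polynomial.X^(4*k+1)) -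
     (∑ k ∈ Finset.range (n+1),
        Polynomial.C (1/(((4*k+3).factorial : ℝ) * ((4*(n-k)).factorial : ℝ))) * Polynomial.X^(4*k+3)))

lemma phi_eval (n : ℕ) : PhiF n = fun x => (Pp n).eval x := by
  funext x
  rcases eq_or_ne n 0 with rfl | h
  · simp [PhiF, Pp, Finset.sum_range_one, Nat.factorial]
    ring
  · simp only [PhiF, Pp, if_neg h, Polynomial.eval_mul, Polynomial.eval_C, Polynomial.eval_sub,
      Polynomial.eval_finset_sum, Polynomial.eval_pow, Polynomial.eval_X]
    congr 2
    · exact Finset.sum_congr rfl fun k _ => by ring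
    · exact Finset.sum_congr rfl fun k _ => by ring

lemma iter_eval (j : ℕ) (p : Polynomial ℝ) :
    iteratedDeriv j (fun y => p.eval y) = fun x => (Polynomial.derivative^[j] p).eval x := by
  induction j generalizing p with
  | zero => simp
  | succ j ih =>
    rw [iteratedDeriv_succ']
    have h : deriv (fun y => p.eval y) = fun y => (Polynomial.derivative p).eval y :=
      funext fun y => Polynomial.deriv p
    rw [h, ih]
    simp [Function.iterate_succ_apply]

lemma key (n j : ℕ) (x : ℝ) :
    iteratedDeriv j (PhiF n) x =
      (-1:ℝ)^n *
        ((∑ k ∈ Finset.range (n+1),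
            (((4*k+1).descFactorial j : ℝ)) * x^(4*k+1-j) /
              (((4*k+1).factorial : ℝ) * ((4*(n-k)+2).factorial : ℝ))) -
         (∑ k ∈ Finset.range (n+1),
            (((4*k+3).descFactorial j : ℝ)) * x^(4*k+3-j) /
              (((4*k+3).factorial : ℝ) * ((4*(n-k)).factorial : ℝ)))) := by
  rw [phi_eval, iter_eval]
  simp only [Pp, Polynomial.iterate_derivative_C_mul, Polynomial.iterate_derivative_sub,
    Polynomial.iterate_derivative_sum, Polynomial.iterate_derivative_X_pow_eq_natCast_mul,
    Polynomial.eval_mul, Polynomial.eval_C, Polynomial.eval_sub, Polynomial.eval_finset_sum,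
    Polynomial.eval_natCast, Polynomial.eval_pow, Polynomial.eval_X]
  congr 2
  · exact Finset.sum_congr rfl fun k _ => by ring
  · exact Finset.sum_congr rfl fun k _ => by ring

lemma key_term (m j r a : ℕ) (h : m = j + r) (y : ℝ) :
    (m.descFactorial j : ℝ) * y / ((m.factorial : ℝ) * (a.factorial : ℝ)) =
      y / ((r.factorial : ℝ) * (a.factorial : ℝ)) := by
  have hjm : j ≤ m := by omega
  have h1 : (m.factorial : ℝ) = ((m - j).factorial : ℝ) * (m.descFactorial j : ℝ) := by
    exact_mod_cast congrArg (Nat.cast : ℕ → ℝ) (Nat.factorial_mul_descFactorial hjm).symm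
  have hr : m - j = r := by omega
  rw [hr] at h1
  have h2 : (m.descFactorial j : ℝ) ≠ 0 :=
    Nat.cast_ne_zero.2 (by rw [Ne, Nat.descFactorial_eq_zero_iff_lt]; omega)
  have h3 : (r.factorial : ℝ) ≠ 0 := Nat.cast_ne_zero.2 (Nat.factorial_ne_zero _)
  have h4 : (a.factorial : ℝ) ≠ 0 := Nat.cast_ne_zero.2 (Nat.factorial_ne_zero _)
  rw [h1]
  field_simp

lemma Icc_sum (f : ℕ → ℝ) (n : ℕ) :
    ∑ k ∈ Finset.Icc 1 n, f k = ∑ k ∈ Finset.range n, f (k+1) := by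
  induction n with
  | zero => simp
  | succ n ih =>
    have h : Finset.Icc 1 (n+1) = insert (n+1) (Finset.Icc 1 n) := by
      ext m; simp; omega
    rw [h, Finset.sum_insert (by simp), ih, Finset.sum_range_succ]
    ring

/-- The flatness recursion and boundary conditions for the `Φ_n`:
`Φ_0'''' ≡ 0`, `Φ_0(0) = Φ_0''(0) = Φ_0'(1) = 0`, `Φ_0'''(1) = −1`; and for `n ≥ 1`,
`Φ_n'''' = −Φ_{n−1}` on `ℝ`, with `Φ_n(0) = 0`, `Φ_n''(0) = 0`, `Φ_n'(1) = 0` and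
`Φ_n'''(1) = Ψ_n`. -/
theorem stmt13 :
    (∀ x : ℝ, iteratedDeriv 4 (PhiF 0) x = 0) ∧
    PhiF 0 0 = 0 ∧ iteratedDeriv 2 (PhiF 0) 0 = 0 ∧ deriv (PhiF 0) 1 = 0 ∧
    iteratedDeriv 3 (PhiF 0) 1 = -1 ∧
    ∀ n : ℕ, 1 ≤ n →
      (∀ x : ℝ, iteratedDeriv 4 (PhiF n) x = -(PhiF (n - 1) x)) ∧
      PhiF n 0 = 0 ∧ iteratedDeriv 2 (PhiF n) 0 = 0 ∧ deriv (PhiF n) 1 = 0 ∧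
      iteratedDeriv 3 (PhiF n) 1 = PsiN n := by
  refine ⟨?_, ?_, ?_, ?_, ?_, ?_⟩
  · intro x
    rw [key 0 4 x]
    norm_num [Finset.sum_range_one, Nat.descFactorial]
  · norm_num [PhiF]
  · rw [key 0 2 0]
    norm_num [Finset.sum_range_one, Nat.descFactorial]
  · rw [← iteratedDeriv_one, key 0 1 1]
    norm_num [Finset.sum_range_one, Nat.descFactorial, Nat.factorial]
  · rw [key 0 3 1]
    norm_num [Finset.sum_range_one, Nat.descFactorial, Nat.factorial]
  · rintro n hn
    obtain ⟨m, rfl⟩ : ∃ m, n = m + 1 := ⟨n - 1, by omega⟩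
    simp only [Nat.add_sub_cancel]
    refine ⟨?_, ?_, ?_, ?_, ?_⟩
    · intro x
      have hm := key m 0 x
      rw [iteratedDeriv_zero] at hm
      rw [key (m+1) 4 x, hm]
      rw [Finset.sum_range_succ' _ (m+1), Finset.sum_range_succ' _ (m+1)]
      have hS1 : ∀ k ∈ Finset.range (m+1),
          (((4*(k+1)+1).descFactorial 4 : ℝ)) * x^(4*(k+1)+1-4) /
            (((4*(k+1)+1).factorial : ℝ) * ((4*(m+1-(k+1))+2).factorial : ℝ)) =
          ((4*k+1).descFactorial 0 : ℝ) * x^(4*k+1-0) /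
            (((4*k+1).factorial : ℝ) * ((4*(m-k)+2).factorial : ℝ)) := by
        intro k _
        rw [show 4*(k+1)+1 = 4*k+5 from by omega, show 4*k+5-4 = 4*k+1 from by omega,
          show m+1-(k+1) = m-k from by omega,
          key_term (4*k+5) 4 (4*k+1) (4*(m-k)+2) (by omega)]
        simp
      have hS2 : ∀ k ∈ Finset.range (m+1),
          (((4*(k+1)+3).descFactorial 4 : ℝ)) * x^(4*(k+1)+3-4) /
            (((4*(k+1)+3).factorial : ℝ) * ((4*(m+1-(k+1))).factorial : ℝ)) =
          ((4*k+3).descFactorial 0 : ℝ) * x^(4*k+3-0) /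
            (((4*k+3).factorial : ℝ) * ((4*(m-k)).factorial : ℝ)) := by
        intro k _
        rw [show 4*(k+1)+3 = 4*k+7 from by omega, show 4*k+7-4 = 4*k+3 from by omega,
          show m+1-(k+1) = m-k from by omega,
          key_term (4*k+7) 4 (4*k+3) (4*(m-k)) (by omega)]
        simp
      rw [Finset.sum_congr rfl hS1, Finset.sum_congr rfl hS2]
      norm_num [Nat.descFactorial]
      ring
    · have hm := key (m+1) 0 0
      rw [iteratedDeriv_zero] at hm
      rw [hm, Finset.sum_eq_zero, Finset.sum_eq_zero]
      · ring
      · intro k _; rw [zero_pow (by omega : 4*k+3-0 ≠ 0)]; simp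
      · intro k _; rw [zero_pow (by omega : 4*k+1-0 ≠ 0)]; simp
    · rw [key (m+1) 2 0, Finset.sum_eq_zero, Finset.sum_eq_zero]
      · ring
      · intro k _; rw [show 4*k+3-2 = 4*k+1 from by omega, zero_pow (by omega : 4*k+1 ≠ 0)]; simp
      · intro k _
        rcases Nat.eq_zero_or_pos k with rfl | hk
        · norm_num [Nat.descFactorial]
        · rw [zero_pow (by omega : 4*k+1-2 ≠ 0)]; simp
    · rw [← iteratedDeriv_one, key (m+1) 1 1]
      have h1 : ∀ k ∈ Finset.range (m+2),
          (((4*k+1).descFactorial 1 : ℝ)) * (1:ℝ)^(4*k+1-1) /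
            (((4*k+1).factorial : ℝ) * ((4*(m+1-k)+2).factorial : ℝ)) =
          1 / (((4*k).factorial : ℝ) * ((4*(m+1-k)+2).factorial : ℝ)) := by
        intro k _
        rw [key_term (4*k+1) 1 (4*k) (4*(m+1-k)+2) (by omega)]
        simp
      have h2 : ∀ k ∈ Finset.range (m+2),
          (((4*k+3).descFactorial 1 : ℝ)) * (1:ℝ)^(4*k+3-1) /
            (((4*k+3).factorial : ℝ) * ((4*(m+1-k)).factorial : ℝ)) =
          1 / (((4*k+2).factorial : ℝ) * ((4*(m+1-k)).factorial : ℝ)) := by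
        intro k _
        rw [key_term (4*k+3) 1 (4*k+2) (4*(m+1-k)) (by omega)]
        simp
      rw [Finset.sum_congr rfl h1, Finset.sum_congr rfl h2]
      have h3 : ∑ k ∈ Finset.range (m+2),
            (1:ℝ) / (((4*k).factorial : ℝ) * ((4*(m+1-k)+2).factorial : ℝ)) =
          ∑ k ∈ Finset.range (m+2),
            (1:ℝ) / (((4*k+2).factorial : ℝ) * ((4*(m+1-k)).factorial : ℝ)) := by
        refine (Finset.sum_range_reflect
          (fun k => (1:ℝ) / (((4*k).factorial : ℝ) * ((4*(m+1-k)+2).factorial : ℝ)))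
          (m+2)).symm.trans (Finset.sum_congr rfl fun k hk => ?_)
        have hk' : k ≤ m+1 := by simp at hk; omega
        rw [show m+2-1-k = m+1-k from by omega, show m+1-(m+1-k) = k from by omega]
        ring
      rw [h3]
      ring
    · rw [key (m+1) 3 1, PsiN, Icc_sum]
      rw [Finset.sum_range_succ' _ (m+1)]
      have hS1 : ∀ k ∈ Finset.range (m+1),
          (((4*(k+1)+1).descFactorial 3 : ℝ)) * (1:ℝ)^(4*(k+1)+1-3) /
            (((4*(k+1)+1).factorial : ℝ) * ((4*(m+1-(k+1))+2).factorial : ℝ)) =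
          1 / (((4*(k+1)-2).factorial : ℝ) * ((4*(m+1-(k+1))+2).factorial : ℝ)) := by
        intro k _
        rw [show 4*(k+1)+1 = 4*k+5 from by omega, show 4*(k+1)-2 = 4*k+2 from by omega,
          key_term (4*k+5) 3 (4*k+2) (4*(m+1-(k+1))+2) (by omega)]
        simp
      have hS2 : ∀ k ∈ Finset.range (m+2),
          (((4*k+3).descFactorial 3 : ℝ)) * (1:ℝ)^(4*k+3-3) /
            (((4*k+3).factorial : ℝ) * ((4*(m+1-k)).factorial : ℝ)) =
          1 / (((4*k).factorial : ℝ) * ((4*(m+1-k)).factorial : ℝ)) := by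
        intro k _
        rw [key_term (4*k+3) 3 (4*k) (4*(m+1-k)) (by omega)]
        simp
      rw [Finset.sum_congr rfl hS1, Finset.sum_congr rfl hS2]
      norm_num [Nat.descFactorial]
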